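/- Fix a binary training set (x_1,y_1),…,(x_n,y_n) with labels y_i ∈ {−1,+1} and at least one example from each class, and assume the feature map h renders the data linearly separable, i.e. there exists w with y_i⟨w, h(x_i)⟩ ≥ 1 for all i ∈ [n]. Fix parameters Δ_+, Δ_− > 0, ω_+, ω_− ≥ 0 not both zero (with ω_{y_i} > 0 for all occurring labels) and ι_+, ι_− ∈ ℝ, and consider the VS-loss L(w) = Σ_{i=1}^n ω_{y_i} log(1 + e^{ι_{y_i}} e^{−Δ_{y_i} y_i ⟨w, h(x_i)⟩}). For each R > 0 let w_R be a minimizer of L over the ball {w : ‖w‖₂ ≤ R}, and let ŵ_δ be the solution of the CS-SVM problem with margin ratio δ = Δ_−/Δ_+: minimize ‖w‖₂ subject to ⟨w, h(x_i)⟩ ≥ δ whenever y_i = +1 and ⟨w, h(x_i)⟩ ≤ −1 whenever y_i = −1. Then lim_{R→∞} w_R/‖w_R‖₂ = ŵ_δ/‖ŵ_δ‖₂. -/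

import Mathlib

open Filter
open scoped RealInnerProductSpace Topology

/-- log(1+t) ≥ t/2 for 0 ≤ t ≤ 1. -/
lemma aux_log_ge_half {t : ℝ} (ht : 0 ≤ t) (ht1 : t ≤ 1) :
    t / 2 ≤ Real.log (1 + t) := by
  have h2 : Real.log (1 + t)⁻¹ ≤ (1 + t)⁻¹ - 1 :=
    Real.log_le_sub_one_of_pos (by positivity)
  rw [Real.log_inv] at h2
  have h3 : 1 - (1 + t)⁻¹ ≤ Real.log (1 + t) := by linarith
  have h4 : 1 - (1 + t)⁻¹ = t / (1 + t) := by field_simp; ring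
  rw [h4] at h3
  have h5 : t / 2 ≤ t / (1 + t) := by
    apply div_le_div_of_nonneg_left ht (by linarith) (by linarith)
  linarith

/-- log(1+t) ≤ t for t ≥ 0 -/
lemma aux_log_le {t : ℝ} (ht : 0 ≤ t) : Real.log (1 + t) ≤ t := by
  have := Real.log_le_sub_one_of_pos (x := 1 + t) (by linarith)
  linarith

set_option maxHeartbeats 2000000 in
theorem stmt0 {X : Type*} {n p : ℕ}
    (x : Fin n → X) (y : Fin n → ℝ) (h : X → EuclideanSpace ℝ (Fin p))
    (hy : ∀ i, y i = 1 ∨ y i = -1)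
    (hpos : ∃ i, y i = 1) (hneg : ∃ i, y i = -1)
    (hsep : ∃ w : EuclideanSpace ℝ (Fin p), ∀ i, 1 ≤ y i * ⟪w, h (x i)⟫)
    (Δp Δm ωp ωm ιp ιm : ℝ)
    (hΔp : 0 < Δp) (hΔm : 0 < Δm)
    (hωp : 0 ≤ ωp) (hωm : 0 ≤ ωm) (hω0 : ¬(ωp = 0 ∧ ωm = 0))
    (hωocc : ∀ i, 0 < if y i = 1 then ωp else ωm)
    (L : EuclideanSpace ℝ (Fin p) → ℝ)
    (hL : ∀ w, L w = ∑ i, (if y i = 1 then ωp else ωm) *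
      Real.log (1 + Real.exp (if y i = 1 then ιp else ιm) *
        Real.exp (-(if y i = 1 then Δp else Δm) * (y i * ⟪w, h (x i)⟫))))
    (wR : ℝ → EuclideanSpace ℝ (Fin p))
    (hwR : ∀ R > (0:ℝ), ‖wR R‖ ≤ R ∧ ∀ w, ‖w‖ ≤ R → L (wR R) ≤ L w)
    (δ : ℝ) (hδ : δ = Δm / Δp)
    (wδ : EuclideanSpace ℝ (Fin p))
    (hfeas : (∀ i, y i = 1 → δ ≤ ⟪wδ, h (x i)⟫) ∧ ∀ i, y i = -1 → ⟪wδ, h (x i)⟫ ≤ -1)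
    (hopt : ∀ w : EuclideanSpace ℝ (Fin p),
      ((∀ i, y i = 1 → δ ≤ ⟪w, h (x i)⟫) ∧ ∀ i, y i = -1 → ⟪w, h (x i)⟫ ≤ -1) →
      ‖wδ‖ ≤ ‖w‖) :
    Tendsto (fun R => ‖wR R‖⁻¹ • wR R) atTop (𝓝 (‖wδ‖⁻¹ • wδ)) := by
  classical
  obtain ⟨ipos, hipos⟩ := hpos
  obtain ⟨ineg, hineg⟩ := hneg
  have hne : (Finset.univ : Finset (Fin n)).Nonempty := ⟨ipos, Finset.mem_univ _⟩
  set ω : Fin n → ℝ := fun i => if y i = 1 then ωp else ωm with hωdef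
  set ι : Fin n → ℝ := fun i => if y i = 1 then ιp else ιm with hιdef
  set v : Fin n → EuclideanSpace ℝ (Fin p) :=
    fun i => ((if y i = 1 then Δp else Δm) * y i) • h (x i) with hvdef
  have hvinner : ∀ (w : EuclideanSpace ℝ (Fin p)) i,
      ⟪w, v i⟫ = (if y i = 1 then Δp else Δm) * (y i * ⟪w, h (x i)⟫) := by
    intro w i
    simp only [hvdef, real_inner_smul_right]
    ring
  have hL' : ∀ w, L w = ∑ i, ω i * Real.log (1 + Real.exp (ι i) * Real.exp (-⟪w, v i⟫)) := by
    intro w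
    rw [hL w]
    apply Finset.sum_congr rfl
    intro i _
    rw [hvinner]
    simp only [hωdef, hιdef]
    ring_nf
  have hωppos : 0 < ωp := by simpa [hipos] using hωocc ipos
  have hωmpos : 0 < ωm := by
    have := hωocc ineg
    simp only [hineg] at this
    norm_num at this
    exact this
  have hδpos : 0 < δ := by rw [hδ]; positivity
  have hfeas_v : ∀ i, Δm ≤ ⟪wδ, v i⟫ := by
    intro i
    rw [hvinner]
    rcases hy i with hy1 | hy1
    · have h1 := hfeas.1 i hy1
      rw [if_pos hy1, hy1, one_mul]
      have hΔmδ : Δm = Δp * δ := by rw [hδ]; field_simp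
      rw [hΔmδ]
      nlinarith
    · have h1 := hfeas.2 i hy1
      have hne1 : y i ≠ 1 := by rw [hy1]; norm_num
      rw [if_neg hne1, hy1]
      nlinarith
  have hopt_v : ∀ w : EuclideanSpace ℝ (Fin p), (∀ i, Δm ≤ ⟪w, v i⟫) → ‖wδ‖ ≤ ‖w‖ := by
    intro w hw
    apply hopt
    constructor
    · intro i hy1
      have h1 := hw i
      rw [hvinner, if_pos hy1, hy1, one_mul] at h1
      rw [hδ, div_le_iff₀ hΔp, mul_comm]
      linarith
    · intro i hy1
      have h1 := hw i
      have hne1 : y i ≠ 1 := by rw [hy1]; norm_num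
      rw [hvinner, if_neg hne1, hy1] at h1
      nlinarith
  have hwδne : wδ ≠ 0 := by
    intro h0
    have h1 := hfeas.1 ipos hipos
    rw [h0] at h1
    simp only [inner_zero_left] at h1
    linarith
  have hwδnorm : 0 < ‖wδ‖ := norm_pos_iff.mpr hwδne
  set γ : ℝ := Δm / ‖wδ‖ with hγdef
  have hγpos : 0 < γ := by positivity
  set ustar : EuclideanSpace ℝ (Fin p) := ‖wδ‖⁻¹ • wδ with hustardef
  have hustarnorm : ‖ustar‖ = 1 := by
    rw [hustardef, norm_smul, norm_inv, norm_norm, inv_mul_cancel₀ (ne_of_gt hwδnorm)]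
  have hustar_margin : ∀ i, γ ≤ ⟪ustar, v i⟫ := by
    intro i
    rw [hustardef, real_inner_smul_left, hγdef, div_eq_inv_mul]
    have h1 := hfeas_v i
    have h2 : (0:ℝ) < ‖wδ‖⁻¹ := by positivity
    nlinarith
  -- uniqueness of the max-margin direction
  have huniq : ∀ u : EuclideanSpace ℝ (Fin p), ‖u‖ = 1 → (∀ i, γ ≤ ⟪u, v i⟫) → u = ustar := by
    intro u hu hmarg
    set w' : EuclideanSpace ℝ (Fin p) := ‖wδ‖ • u with hw'def
    have hw'norm : ‖w'‖ = ‖wδ‖ := by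
      rw [hw'def, norm_smul, Real.norm_eq_abs, abs_of_pos hwδnorm, hu, mul_one]
    have hw'feas : ∀ i, Δm ≤ ⟪w', v i⟫ := by
      intro i
      rw [hw'def, real_inner_smul_left]
      have h1 := hmarg i
      rw [hγdef, div_le_iff₀ hwδnorm] at h1
      nlinarith
    have hmidfeas : ∀ i, Δm ≤ ⟪(2:ℝ)⁻¹ • (wδ + w'), v i⟫ := by
      intro i
      rw [real_inner_smul_left, inner_add_left]
      have h1 := hfeas_v i
      have h2 := hw'feas i
      linarith
    have hmidnorm : ‖wδ‖ ≤ ‖(2:ℝ)⁻¹ • (wδ + w')‖ := hopt_v _ hmidfeas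
    have habs : |(2:ℝ)⁻¹| = 2⁻¹ := by norm_num
    have htri : ‖(2:ℝ)⁻¹ • (wδ + w')‖ ≤ ‖wδ‖ := by
      rw [norm_smul, Real.norm_eq_abs, habs]
      have h1 := norm_add_le wδ w'
      rw [hw'norm] at h1
      linarith
    have heq : ‖wδ + w'‖ = ‖wδ‖ + ‖w'‖ := by
      have h1 : ‖(2:ℝ)⁻¹ • (wδ + w')‖ = ‖wδ‖ := le_antisymm htri hmidnorm
      rw [norm_smul, Real.norm_eq_abs, habs] at h1
      rw [hw'norm]
      linarith
    have hinner : ⟪wδ, w'⟫ = ‖wδ‖ * ‖w'‖ := by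
      have hsq : ‖wδ + w'‖ ^ 2 = (‖wδ‖ + ‖w'‖) ^ 2 := by rw [heq]
      rw [← real_inner_self_eq_norm_sq, inner_add_add_self,
        real_inner_self_eq_norm_sq, real_inner_self_eq_norm_sq] at hsq
      nlinarith [real_inner_comm wδ w', hsq]
    have hpar := inner_eq_norm_mul_iff_real.mp hinner
    rw [hw'norm, hw'def] at hpar
    have h2 : wδ = ‖wδ‖ • u := smul_right_injective _ (ne_of_gt hwδnorm) hpar
    have h3 := congrArg (fun z => ‖wδ‖⁻¹ • z) h2
    simp only [smul_smul, inv_mul_cancel₀ (ne_of_gt hwδnorm), one_smul] at h3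
    rw [hustardef, ← h3]
  -- the margin function and its continuity
  set marg : EuclideanSpace ℝ (Fin p) → ℝ :=
    fun u => Finset.univ.inf' hne (fun i => ⟪u, v i⟫) with hmargdef
  have hmarg_cont : Continuous marg := by
    apply Continuous.finset_inf'_apply hne
    intro i _
    exact Continuous.inner continuous_id continuous_const
  -- gap lemma
  have gap : ∀ ε > (0:ℝ), ∃ m : ℝ, 0 < m ∧ m < γ ∧
      ∀ (w : EuclideanSpace ℝ (Fin p)) (R : ℝ), 0 ≤ R → ‖w‖ ≤ R →
      (w = 0 ∨ ε ≤ ‖‖w‖⁻¹ • w - ustar‖) → ∃ i, ⟪w, v i⟫ ≤ R * m := by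
    intro ε hε
    set S : Set (EuclideanSpace ℝ (Fin p)) := {u | ‖u‖ = 1 ∧ ε ≤ ‖u - ustar‖} with hSdef
    have hScompact : IsCompact S := by
      have hclosed : IsClosed S := by
        apply IsClosed.inter
        · exact isClosed_eq continuous_norm continuous_const
        · exact isClosed_le continuous_const ((continuous_id.sub continuous_const).norm)
      have hbounded : Bornology.IsBounded S := by
        apply Bornology.IsBounded.subset (Metric.isBounded_closedBall (x := 0) (r := 1))
        intro u hu
        simp only [Metric.mem_closedBall, dist_zero_right]
        exact le_of_eq hu.1
      exact Metric.isCompact_of_isClosed_isBounded hclosed hbounded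
    -- key claim: on S, margin is ≤ some m < γ
    have key : ∃ m : ℝ, 0 < m ∧ m < γ ∧ ∀ u ∈ S, marg u ≤ m := by
      rcases S.eq_empty_or_nonempty with hS | hS
      · exact ⟨γ / 2, by positivity, by linarith, fun u hu => by rw [hS] at hu; exact hu.elim⟩
      · obtain ⟨u₀, hu₀S, hu₀max⟩ := hScompact.exists_isMaxOn hS hmarg_cont.continuousOn
        have hu₀ne : u₀ ≠ ustar := by
          intro hcontra
          have := hu₀S.2
          rw [hcontra, sub_self, norm_zero] at this
          linarith
        have hM : marg u₀ < γ := by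
          by_contra hcon
          push_neg at hcon
          have : ∀ i, γ ≤ ⟪u₀, v i⟫ := by
            intro i
            calc γ ≤ marg u₀ := hcon
              _ ≤ ⟪u₀, v i⟫ := Finset.inf'_le _ (Finset.mem_univ i)
          exact hu₀ne (huniq u₀ hu₀S.1 this)
        refine ⟨max (marg u₀) (γ / 2), lt_max_of_lt_right (by positivity),
          max_lt hM (by linarith), ?_⟩
        intro u hu
        exact le_max_of_le_left (hu₀max hu)
    obtain ⟨m, hm0, hmγ, hmS⟩ := key
    refine ⟨m, hm0, hmγ, ?_⟩
    intro w R hR hwnorm hfar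
    rcases eq_or_ne w 0 with h0 | h0
    · exact ⟨ipos, by rw [h0]; simp only [inner_zero_left]; positivity⟩
    · have hfar' : ε ≤ ‖‖w‖⁻¹ • w - ustar‖ := by
        rcases hfar with h1 | h1
        · exact absurd h1 h0
        · exact h1
      have hwpos : 0 < ‖w‖ := norm_pos_iff.mpr h0
      have huS : ‖w‖⁻¹ • w ∈ S := by
        constructor
        · rw [norm_smul, norm_inv, norm_norm, inv_mul_cancel₀ (ne_of_gt hwpos)]
        · exact hfar'
      have h2 : marg (‖w‖⁻¹ • w) ≤ m := hmS _ huS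
      obtain ⟨i, _, hieq⟩ := Finset.exists_mem_eq_inf' hne (fun i => ⟪‖w‖⁻¹ • w, v i⟫)
      simp only [hmargdef] at h2
      rw [hieq] at h2
      refine ⟨i, ?_⟩
      have h3 : ⟪w, v i⟫ = ‖w‖ * ⟪‖w‖⁻¹ • w, v i⟫ := by
        rw [real_inner_smul_left]
        field_simp
      rw [h3]
      rcases le_or_gt (⟪‖w‖⁻¹ • w, v i⟫ : ℝ) 0 with h4 | h4
      · have : ‖w‖ * ⟪‖w‖⁻¹ • w, v i⟫ ≤ 0 := mul_nonpos_of_nonneg_of_nonpos (le_of_lt hwpos) h4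
        nlinarith
      · calc ‖w‖ * ⟪‖w‖⁻¹ • w, v i⟫ ≤ R * ⟪‖w‖⁻¹ • w, v i⟫ := by nlinarith
          _ ≤ R * m := by nlinarith
  -- upper and lower bounds on L
  set C : ℝ := ∑ i, ω i * Real.exp (ι i) with hCdef
  have hCnn : 0 ≤ C := by
    apply Finset.sum_nonneg
    intro i _
    have := hωocc i
    positivity
  have hωι : ∀ i, min ωp ωm ≤ ω i ∧ min ιp ιm ≤ ι i := by
    intro i
    constructor
    · rw [hωdef]; dsimp only; split <;> [exact min_le_left _ _; exact min_le_right _ _]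
    · rw [hιdef]; dsimp only; split <;> [exact min_le_left _ _; exact min_le_right _ _]
  set ω₀ : ℝ := min ωp ωm with hω₀def
  set ι₀ : ℝ := min ιp ιm with hι₀def
  have hω₀pos : 0 < ω₀ := lt_min hωppos hωmpos
  have upper : ∀ R : ℝ, 0 ≤ R → L (R • ustar) ≤ C * Real.exp (-(R * γ)) := by
    intro R hR
    rw [hL', hCdef, Finset.sum_mul]
    apply Finset.sum_le_sum
    intro i _
    have hωi : 0 ≤ ω i := le_of_lt (hωocc i)
    have h1 : R * γ ≤ ⟪R • ustar, v i⟫ := by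
      rw [real_inner_smul_left]
      have := hustar_margin i
      nlinarith
    have h2 : Real.exp (ι i) * Real.exp (-⟪R • ustar, v i⟫) ≤ Real.exp (ι i) * Real.exp (-(R * γ)) := by
      apply mul_le_mul_of_nonneg_left _ (le_of_lt (Real.exp_pos _))
      exact Real.exp_le_exp.mpr (by linarith)
    have h3 : Real.log (1 + Real.exp (ι i) * Real.exp (-⟪R • ustar, v i⟫)) ≤
        Real.exp (ι i) * Real.exp (-(R * γ)) := by
      calc Real.log (1 + Real.exp (ι i) * Real.exp (-⟪R • ustar, v i⟫)) ≤
          Real.exp (ι i) * Real.exp (-⟪R • ustar, v i⟫) := aux_log_le (by positivity)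
        _ ≤ _ := h2
    calc ω i * Real.log (1 + Real.exp (ι i) * Real.exp (-⟪R • ustar, v i⟫)) ≤
        ω i * (Real.exp (ι i) * Real.exp (-(R * γ))) := mul_le_mul_of_nonneg_left h3 hωi
      _ = ω i * Real.exp (ι i) * Real.exp (-(R * γ)) := by ring
  have lower : ∀ (w : EuclideanSpace ℝ (Fin p)) (R m : ℝ) (i : Fin n),
      ⟪w, v i⟫ ≤ R * m → Real.exp (ι₀ - R * m) ≤ 1 →
      ω₀ / 2 * Real.exp (ι₀ - R * m) ≤ L w := by
    intro w R m i hi ht1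
    have hterm_nonneg : ∀ j ∈ Finset.univ, (0:ℝ) ≤
        ω j * Real.log (1 + Real.exp (ι j) * Real.exp (-⟪w, v j⟫)) := by
      intro j _
      apply mul_nonneg (le_of_lt (hωocc j))
      apply Real.log_nonneg
      nlinarith [Real.exp_pos (ι j), Real.exp_pos (-⟪w, v j⟫),
        mul_pos (Real.exp_pos (ι j)) (Real.exp_pos (-⟪w, v j⟫))]
    have hsingle : ω i * Real.log (1 + Real.exp (ι i) * Real.exp (-⟪w, v i⟫)) ≤ L w := by
      rw [hL']
      exact Finset.single_le_sum hterm_nonneg (Finset.mem_univ i)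
    set t : ℝ := Real.exp (ι₀ - R * m) with htdef
    have htpos : 0 < t := Real.exp_pos _
    have hle : t ≤ Real.exp (ι i) * Real.exp (-⟪w, v i⟫) := by
      rw [htdef, ← Real.exp_add]
      apply Real.exp_le_exp.mpr
      have := (hωι i).2
      linarith
    have hlog1 : Real.log (1 + t) ≤ Real.log (1 + Real.exp (ι i) * Real.exp (-⟪w, v i⟫)) := by
      apply Real.log_le_log (by positivity)
      linarith
    have hlog2 : t / 2 ≤ Real.log (1 + t) := aux_log_ge_half (le_of_lt htpos) ht1
    have hωi₀ : ω₀ ≤ ω i := (hωι i).1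
    calc ω₀ / 2 * t = ω₀ * (t / 2) := by ring
      _ ≤ ω i * Real.log (1 + Real.exp (ι i) * Real.exp (-⟪w, v i⟫)) := by
        apply mul_le_mul hωi₀ (by linarith) (by positivity) (le_of_lt (hωocc i))
      _ ≤ L w := hsingle
  -- final argument
  rw [Metric.tendsto_atTop]
  intro ε hε
  obtain ⟨m, hm0, hmγ, hgap⟩ := gap ε hε
  have hγm : 0 < γ - m := by linarith
  have hlimq : Tendsto (fun R : ℝ => C * Real.exp (-ι₀) * Real.exp (-(R * (γ - m)))) atTop (𝓝 0) := by
    have h1 : Tendsto (fun R : ℝ => R * (γ - m)) atTop atTop :=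
      Tendsto.atTop_mul_const hγm tendsto_id
    have h2 : Tendsto (fun R : ℝ => Real.exp (-(R * (γ - m)))) atTop (𝓝 0) :=
      Real.tendsto_exp_neg_atTop_nhds_zero.comp h1
    have := h2.const_mul (C * Real.exp (-ι₀))
    simpa using this
  have hev1 : ∀ᶠ R in atTop, C * Real.exp (-ι₀) * Real.exp (-(R * (γ - m))) < ω₀ / 2 := by
    have : (0:ℝ) < ω₀ / 2 := by positivity
    exact hlimq.eventually (Filter.Tendsto.eventually_lt_const this tendsto_id |>.mono fun a ha => ha)
  have hev2 : ∀ᶠ R in atTop, Real.exp (ι₀ - R * m) ≤ 1 := by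
    filter_upwards [eventually_ge_atTop (ι₀ / m)] with R hR
    rw [Real.exp_le_one_iff]
    rw [div_le_iff₀ hm0] at hR
    linarith
  have hev3 : ∀ᶠ R in atTop, (1:ℝ) ≤ R := eventually_ge_atTop 1
  obtain ⟨N, hN⟩ := eventually_atTop.mp ((hev1.and hev2).and hev3)
  refine ⟨N, fun R hR => ?_⟩
  obtain ⟨⟨h1, h2⟩, h3⟩ := hN R hR
  have hRpos : (0:ℝ) < R := lt_of_lt_of_le one_pos h3
  by_contra hcon
  push_neg at hcon
  rw [dist_eq_norm] at hcon
  obtain ⟨hb, hmin⟩ := hwR R hRpos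
  obtain ⟨i, hi⟩ := hgap (wR R) R (le_of_lt hRpos) hb (Or.inr hcon)
  have hlow := lower (wR R) R m i hi h2
  have hup := upper R (le_of_lt hRpos)
  have hmin' : L (wR R) ≤ L (R • ustar) := by
    apply hmin
    rw [norm_smul, hustarnorm, mul_one, Real.norm_eq_abs, abs_of_pos hRpos]
  have hcompare : C * Real.exp (-(R * γ)) < ω₀ / 2 * Real.exp (ι₀ - R * m) := by
    have e1 : Real.exp (-(R * γ)) =
        Real.exp (-ι₀) * Real.exp (-(R * (γ - m))) * Real.exp (ι₀ - R * m) := by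
      rw [← Real.exp_add, ← Real.exp_add]
      ring_nf
    calc C * Real.exp (-(R * γ))
        = (C * Real.exp (-ι₀) * Real.exp (-(R * (γ - m)))) * Real.exp (ι₀ - R * m) := by
          rw [e1]; ring
      _ < ω₀ / 2 * Real.exp (ι₀ - R * m) :=
          mul_lt_mul_of_pos_right h1 (Real.exp_pos _)
  linarith
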